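/- For every natural number r, T(3^(2^r), 3) ≤ 4r + 3. -/

import Mathlib

/-- The outcome of a cascaded test `t` (a list of items) on a defective set `S`:
the first element of `t` belonging to `S`, or `none` if there is none. -/
def outcome {N : ℕ} (t : List (Fin N)) (S : Finset (Fin N)) : Option (Fin N) :=
  (t.filter (fun x => x ∈ S)).head?

/-- A testing design `𝒯` (an indexed family of tests) is feasible for `(N, K)` if the
map sending each `S ⊆ Fin N` with `|S| ≤ K` to its vector of test outcomes is injective
on `{S | |S| ≤ K}`. -/
def Feasible (N K : ℕ) {T : ℕ} (𝒯 : Fin T → List (Fin N)) : Prop :=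
  Set.InjOn (fun (S : Finset (Fin N)) => fun i : Fin T => outcome (𝒯 i) S)
    {S : Finset (Fin N) | S.card ≤ K}

/-- `TNK N K`: the minimum number of tests over all duplicate-free testing designs
feasible for `(N, K)`. -/
noncomputable def TNK (N K : ℕ) : ℕ :=
  sInf {T : ℕ | ∃ 𝒯 : Fin T → List (Fin N), (∀ i, (𝒯 i).Nodup) ∧ Feasible N K 𝒯}

/-- `fT 𝒯 S v`: the number of tests in the design `𝒯` whose outcome on `S` is `some v`. -/
def fT {N T : ℕ} (𝒯 : Fin T → List (Fin N)) (S : Finset (Fin N)) (v : Fin N) : ℕ :=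
  (Finset.univ.filter (fun i : Fin T => outcome (𝒯 i) S = some v)).card

/-- A design is in systematic form if every test is nonempty and the first element of
each test does not occur in any other test. -/
def Systematic {N T : ℕ} (𝒯 : Fin T → List (Fin N)) : Prop :=
  ∀ i : Fin T, 𝒯 i ≠ [] ∧ ∀ u : Fin N, (𝒯 i).head? = some u → ∀ j : Fin T, j ≠ i → u ∉ 𝒯 j

/-! ### Nat-level key families -/

/-- swap 0 and 1 -/
def sw (n : ℕ) : ℕ := if n = 0 then 1 else if n = 1 then 0 else n

/-- recursive covering family of keys on `[0, 3^(2^r))` -/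
def famF : ℕ → List (ℕ → ℕ)
  | 0 => [sw]
  | (r+1) =>
    (fun n => (n / 3 ^ 2 ^ r) * 3 ^ 2 ^ r + (3 ^ 2 ^ r - 1 - n % 3 ^ 2 ^ r)) ::
    (fun n => (3 ^ 2 ^ r - 1 - n / 3 ^ 2 ^ r) * 3 ^ 2 ^ r + n % 3 ^ 2 ^ r) ::
    (famF r).map (fun κ => fun n => κ (n / 3 ^ 2 ^ r) * 3 ^ 2 ^ r + κ (n % 3 ^ 2 ^ r))

lemma famF_length (r : ℕ) : (famF r).length = 2 * r + 1 := by
  induction r with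
  | zero => rfl
  | succ r ih => simp [famF, ih]; omega

lemma pow_sq (r : ℕ) : 3 ^ 2 ^ (r + 1) = 3 ^ 2 ^ r * 3 ^ 2 ^ r := by
  rw [pow_succ, pow_mul, sq]

lemma lex_lt {N ph pl qh ql : ℕ} (hpl : pl < N) (hql : ql < N) :
    ph * N + pl < qh * N + ql ↔ ph < qh ∨ (ph = qh ∧ pl < ql) := by
  constructor
  · intro h
    rcases lt_trichotomy ph qh with h1 | h1 | h1
    · exact Or.inl h1
    · exact Or.inr ⟨h1, by subst h1; omega⟩
    · exfalso
      have h2 : (qh + 1) * N ≤ ph * N := Nat.mul_le_mul_right N h1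
      have h3 : (qh + 1) * N = qh * N + N := by ring
      linarith
  · rintro (h | ⟨h1, h2⟩)
    · have h2 : (ph + 1) * N ≤ qh * N := Nat.mul_le_mul_right N h
      have h3 : (ph + 1) * N = ph * N + N := by ring
      linarith
    · subst h1; omega

lemma combine_lt {N x y : ℕ} (hx : x < N) (hy : y < N) : x * N + y < N * N := by
  have h2 : (x + 1) * N ≤ N * N := Nat.mul_le_mul_right N hx
  have h3 : (x + 1) * N = x * N + N := by ring
  linarith

lemma parts_eq {N a b c d : ℕ} (hb : b < N) (hd : d < N) (h : a * N + b = c * N + d) :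
    a = c ∧ b = d := by
  rcases lt_trichotomy a c with h1 | h1 | h1
  · exfalso
    have h2 : (a + 1) * N ≤ c * N := Nat.mul_le_mul_right N h1
    have h3 : (a + 1) * N = a * N + N := by ring
    linarith
  · exact ⟨h1, by subst h1; omega⟩
  · exfalso
    have h2 : (c + 1) * N ≤ a * N := Nat.mul_le_mul_right N h1
    have h3 : (c + 1) * N = c * N + N := by ring
    linarith

lemma recomb {N x y : ℕ} (h1 : x / N = y / N) (h2 : x % N = y % N) : x = y := by
  have hx := Nat.div_add_mod x N
  have hy := Nat.div_add_mod y N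
  rw [← hx, ← hy, h1, h2]

lemma sub_helper {N q : ℕ} (h : 0 < N) : N - 1 - q < N := by omega

lemma sub_cancel {N p q : ℕ} (hp : p < N) (hq : q < N) (h : N - 1 - p = N - 1 - q) : p = q := by
  omega

lemma sub_strict {N p q : ℕ} (h : p < q) (hq : q < N) : N - 1 - q < N - 1 - p := by omega

lemma famF_bound : ∀ r, ∀ κ ∈ famF r, ∀ n < 3 ^ 2 ^ r, κ n < 3 ^ 2 ^ r := by
  intro r
  induction r with
  | zero =>
    intro κ hκ n hn
    simp [famF] at hκ
    subst hκ
    simp only [sw]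
    split_ifs <;> omega
  | succ r ih =>
    intro κ hκ n hn
    have hN : 0 < 3 ^ 2 ^ r := pow_pos (by norm_num) _
    rw [pow_sq] at hn ⊢
    have hhi : n / 3 ^ 2 ^ r < 3 ^ 2 ^ r := Nat.div_lt_of_lt_mul hn
    have hlo : n % 3 ^ 2 ^ r < 3 ^ 2 ^ r := Nat.mod_lt _ hN
    simp only [famF, List.mem_cons, List.mem_map] at hκ
    rcases hκ with h | h | ⟨κ', hκ', h⟩
    · subst h; exact combine_lt hhi (sub_helper hN)
    · subst h; exact combine_lt (sub_helper hN) hlo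
    · subst h
      exact combine_lt (ih κ' hκ' _ hhi) (ih κ' hκ' _ hlo)

lemma famF_inj : ∀ r, ∀ κ ∈ famF r, ∀ x < 3 ^ 2 ^ r, ∀ y < 3 ^ 2 ^ r, κ x = κ y → x = y := by
  intro r
  induction r with
  | zero =>
    intro κ hκ x hx y hy h
    simp [famF] at hκ
    subst hκ
    simp only [sw] at h
    split_ifs at h <;> omega
  | succ r ih =>
    intro κ hκ x hx y hy h
    have hN : 0 < 3 ^ 2 ^ r := pow_pos (by norm_num) _
    rw [pow_sq] at hx hy
    have hxh : x / 3 ^ 2 ^ r < 3 ^ 2 ^ r := Nat.div_lt_of_lt_mul hx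
    have hxl : x % 3 ^ 2 ^ r < 3 ^ 2 ^ r := Nat.mod_lt _ hN
    have hyh : y / 3 ^ 2 ^ r < 3 ^ 2 ^ r := Nat.div_lt_of_lt_mul hy
    have hyl : y % 3 ^ 2 ^ r < 3 ^ 2 ^ r := Nat.mod_lt _ hN
    simp only [famF, List.mem_cons, List.mem_map] at hκ
    rcases hκ with hk | hk | ⟨κ', hκ', hk⟩
    · subst hk
      simp only at h
      obtain ⟨e1, e2⟩ := parts_eq (sub_helper hN) (sub_helper hN) h
      exact recomb e1 (sub_cancel hxl hyl e2)
    · subst hk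
      simp only at h
      obtain ⟨e1, e2⟩ := parts_eq hxl hyl h
      exact recomb (sub_cancel hxh hyh e1) e2
    · subst hk
      simp only at h
      have b1 := famF_bound r κ' hκ'
      obtain ⟨e1, e2⟩ := parts_eq (b1 _ hxl) (b1 _ hyl) h
      exact recomb (ih κ' hκ' _ hxh _ hyh e1) (ih κ' hκ' _ hxl _ hyl e2)

lemma cov : ∀ r, ∀ a m b : ℕ, a < m → m < b → b < 3 ^ 2 ^ r →
    ∃ κ ∈ famF r, κ m < κ a ∧ κ m < κ b := by
  intro r
  induction r with
  | zero =>
    intro a m b h1 h2 h3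
    refine ⟨sw, by simp [famF], ?_⟩
    have ha : a = 0 := by omega
    have hm : m = 1 := by omega
    have hb : b = 2 := by omega
    subst ha; subst hm; subst hb
    simp [sw]
  | succ r ih =>
    intro a m b h1 h2 h3
    have hN : 0 < 3 ^ 2 ^ r := pow_pos (by norm_num) _
    rw [pow_sq] at h3
    have ha3 : a < 3 ^ 2 ^ r * 3 ^ 2 ^ r := by omega
    have hm3 : m < 3 ^ 2 ^ r * 3 ^ 2 ^ r := by omega
    have hah : a / 3 ^ 2 ^ r < 3 ^ 2 ^ r := Nat.div_lt_of_lt_mul ha3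
    have hal : a % 3 ^ 2 ^ r < 3 ^ 2 ^ r := Nat.mod_lt _ hN
    have hmh : m / 3 ^ 2 ^ r < 3 ^ 2 ^ r := Nat.div_lt_of_lt_mul hm3
    have hml : m % 3 ^ 2 ^ r < 3 ^ 2 ^ r := Nat.mod_lt _ hN
    have hbh : b / 3 ^ 2 ^ r < 3 ^ 2 ^ r := Nat.div_lt_of_lt_mul h3
    have hbl : b % 3 ^ 2 ^ r < 3 ^ 2 ^ r := Nat.mod_lt _ hN
    have hae : a / 3 ^ 2 ^ r * 3 ^ 2 ^ r + a % 3 ^ 2 ^ r = a := Nat.div_add_mod' a _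
    have hme : m / 3 ^ 2 ^ r * 3 ^ 2 ^ r + m % 3 ^ 2 ^ r = m := Nat.div_add_mod' m _
    have hbe : b / 3 ^ 2 ^ r * 3 ^ 2 ^ r + b % 3 ^ 2 ^ r = b := Nat.div_add_mod' b _
    have d1 : a / 3 ^ 2 ^ r < m / 3 ^ 2 ^ r ∨
        (a / 3 ^ 2 ^ r = m / 3 ^ 2 ^ r ∧ a % 3 ^ 2 ^ r < m % 3 ^ 2 ^ r) := by
      apply (lex_lt hal hml).mp
      rw [hae, hme]; exact h1
    have d2 : m / 3 ^ 2 ^ r < b / 3 ^ 2 ^ r ∨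
        (m / 3 ^ 2 ^ r = b / 3 ^ 2 ^ r ∧ m % 3 ^ 2 ^ r < b % 3 ^ 2 ^ r) := by
      apply (lex_lt hml hbl).mp
      rw [hme, hbe]; exact h2
    rcases d1 with d1 | ⟨d1e, d1l⟩ <;> rcases d2 with d2 | ⟨d2e, d2l⟩
    · -- all hi distinct : lift IH key
      obtain ⟨κ, hκ, c1, c2⟩ := ih (a / 3 ^ 2 ^ r) (m / 3 ^ 2 ^ r) (b / 3 ^ 2 ^ r) d1 d2 hbh
      have bb := famF_bound r κ hκ
      refine ⟨_, by
        simp only [famF, List.mem_cons, List.mem_map]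
        exact Or.inr (Or.inr ⟨κ, hκ, rfl⟩), ?_, ?_⟩
      · exact (lex_lt (bb _ hml) (bb _ hal)).mpr (Or.inl c1)
      · exact (lex_lt (bb _ hml) (bb _ hbl)).mpr (Or.inl c2)
    · -- a hi < m hi = b hi : second key (rev hi, lo)
      refine ⟨_, by
        simp only [famF, List.mem_cons]
        exact Or.inr (Or.inl rfl), ?_, ?_⟩
      · exact (lex_lt hml hal).mpr (Or.inl (sub_strict d1 hmh))
      · exact (lex_lt hml hbl).mpr (Or.inr ⟨by rw [d2e], d2l⟩)
    · -- a hi = m hi < b hi : first key (hi, rev lo)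
      refine ⟨_, by
        simp only [famF, List.mem_cons]
        exact Or.inl rfl, ?_, ?_⟩
      · exact (lex_lt (sub_helper hN) (sub_helper hN)).mpr
          (Or.inr ⟨by rw [d1e], sub_strict d1l hml⟩)
      · exact (lex_lt (sub_helper hN) (sub_helper hN)).mpr (Or.inl (d1e ▸ d2))
    · -- all hi equal : lift IH key on lows
      have dl1 : a % 3 ^ 2 ^ r < m % 3 ^ 2 ^ r := d1l
      obtain ⟨κ, hκ, c1, c2⟩ := ih (a % 3 ^ 2 ^ r) (m % 3 ^ 2 ^ r) (b % 3 ^ 2 ^ r) dl1 d2l hbl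
      have bb := famF_bound r κ hκ
      refine ⟨_, by
        simp only [famF, List.mem_cons, List.mem_map]
        exact Or.inr (Or.inr ⟨κ, hκ, rfl⟩), ?_, ?_⟩
      · exact (lex_lt (bb _ hml) (bb _ hal)).mpr (Or.inr ⟨by rw [d1e], c1⟩)
      · exact (lex_lt (bb _ hml) (bb _ hbl)).mpr (Or.inr ⟨by rw [d2e], c2⟩)

/-! ### Tests from keys -/

section TestOf

variable {N : ℕ}

def dRel (κ : Fin N → ℕ) : DecidableRel (fun x y : Fin N => κ x ≤ κ y) :=
  fun _ _ => Nat.decLe _ _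

def tRel (κ : Fin N → ℕ) : IsTrans (Fin N) (fun x y => κ x ≤ κ y) :=
  ⟨fun _ _ _ => Nat.le_trans⟩

def aRel (κ : Fin N → ℕ) (h : Function.Injective κ) :
    IsAntisymm (Fin N) (fun x y => κ x ≤ κ y) :=
  ⟨fun _ _ h1 h2 => h (Nat.le_antisymm h1 h2)⟩

def oRel (κ : Fin N → ℕ) : IsTotal (Fin N) (fun x y => κ x ≤ κ y) :=
  ⟨fun _ _ => Nat.le_total _ _⟩

def testOf (κ : Fin N → ℕ) (h : Function.Injective κ) : List (Fin N) :=
  @Finset.sort _ Finset.univ _ (dRel κ) (tRel κ) (aRel κ h) (oRel κ)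

lemma testOf_sorted (κ : Fin N → ℕ) (h : Function.Injective κ) :
    (testOf κ h).Pairwise (fun x y => κ x ≤ κ y) :=
  @Finset.pairwise_sort _ _ _ (dRel κ) (tRel κ) (aRel κ h) (oRel κ)

lemma testOf_nodup (κ : Fin N → ℕ) (h : Function.Injective κ) : (testOf κ h).Nodup :=
  @Finset.sort_nodup _ _ _ (dRel κ) (tRel κ) (aRel κ h) (oRel κ)

lemma testOf_mem (κ : Fin N → ℕ) (h : Function.Injective κ) (x : Fin N) : x ∈ testOf κ h := by
  have := @Finset.mem_sort _ Finset.univ _ (dRel κ) (tRel κ) (aRel κ h) (oRel κ) x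
  exact this.mpr (Finset.mem_univ x)

lemma outcome_mem {t : List (Fin N)} {S : Finset (Fin N)} {m : Fin N}
    (h : outcome t S = some m) : m ∈ S := by
  unfold outcome at h
  have hm : m ∈ t.filter (fun x => x ∈ S) := by
    cases e : t.filter (fun x => x ∈ S) with
    | nil => rw [e] at h; simp at h
    | cons hd tl =>
      rw [e] at h
      simp only [List.head?] at h
      injection h with h
      subst h
      exact List.mem_cons_self
  simpa using (List.mem_filter.mp hm).2

lemma outcome_eq_some (κ : Fin N → ℕ) (h : Function.Injective κ) (S : Finset (Fin N))
    (m : Fin N) (hm : m ∈ S) (hmin : ∀ s ∈ S, κ m ≤ κ s) :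
    outcome (testOf κ h) S = some m := by
  unfold outcome
  have hml : m ∈ (testOf κ h).filter (fun x => x ∈ S) :=
    List.mem_filter.mpr ⟨testOf_mem κ h m, by simpa using hm⟩
  have hsort : ((testOf κ h).filter (fun x => x ∈ S)).Pairwise (fun x y => κ x ≤ κ y) :=
    (testOf_sorted κ h).sublist List.filter_sublist
  cases e : (testOf κ h).filter (fun x => x ∈ S) with
  | nil => rw [e] at hml; simp at hml
  | cons hd tl =>
    rw [e] at hml hsort
    have hhdS : hd ∈ S := by
      have : hd ∈ (testOf κ h).filter (fun x => x ∈ S) := by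
        rw [e]; exact List.mem_cons_self
      simpa using (List.mem_filter.mp this).2
    rcases List.mem_cons.mp hml with hcase | hcase
    · simp [hcase]
    · have h1 : κ hd ≤ κ m := List.rel_of_pairwise_cons hsort hcase
      have h2 : κ m ≤ κ hd := hmin hd hhdS
      have : m = hd := h (Nat.le_antisymm h2 h1)
      simp [this]

end TestOf

/-! ### The design -/

def keysF (r : ℕ) : List (ℕ → ℕ) :=
  (fun n => n) :: (fun n => 3 ^ 2 ^ r - 1 - n) :: famF r

lemma keysF_length (r : ℕ) : (keysF r).length = 2 * r + 3 := by
  simp [keysF, famF_length]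

lemma keysF_inj (r : ℕ) : ∀ κ ∈ keysF r, ∀ x < 3 ^ 2 ^ r, ∀ y < 3 ^ 2 ^ r, κ x = κ y → x = y := by
  intro κ hκ x hx y hy h
  simp only [keysF, List.mem_cons] at hκ
  rcases hκ with rfl | rfl | hκ
  · exact h
  · simp only at h; omega
  · exact famF_inj r κ hκ x hx y hy h

lemma design_inj (r : ℕ) (i : Fin (keysF r).length) :
    Function.Injective (fun x : Fin (3 ^ 2 ^ r) => (keysF r).get i x.val) := by
  intro x y hxy
  exact Fin.val_injective
    (keysF_inj r _ (List.get_mem _ i) x.val x.isLt y.val y.isLt hxy)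

noncomputable def design (r : ℕ) : Fin ((keysF r).length) → List (Fin (3 ^ 2 ^ r)) :=
  fun i => testOf (fun x => (keysF r).get i x.val) (design_inj r i)

lemma outcome_design_eq (r : ℕ) (i : Fin (keysF r).length) (S : Finset (Fin (3 ^ 2 ^ r)))
    (m : Fin (3 ^ 2 ^ r)) (hm : m ∈ S)
    (hmin : ∀ s ∈ S, (keysF r).get i m.val ≤ (keysF r).get i s.val) :
    outcome (design r i) S = some m := by
  unfold design
  exact outcome_eq_some _ _ S m hm hmin

lemma subset_lemma (r : ℕ) (S₁ S₂ : Finset (Fin (3 ^ 2 ^ r))) (h1 : S₁.card ≤ 3)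
    (heq : ∀ i, outcome (design r i) S₁ = outcome (design r i) S₂) : S₁ ⊆ S₂ := by
  intro x hx
  have hne : S₁.Nonempty := ⟨x, hx⟩
  set a := S₁.min' hne with ha
  set b := S₁.max' hne with hb
  by_cases hxa : x = a
  · -- id key at index 0
    have i0 : Fin (keysF r).length := ⟨0, by rw [keysF_length]; omega⟩
    have hout : outcome (design r ⟨0, by rw [keysF_length]; omega⟩) S₁ = some a := by
      apply outcome_design_eq
      · exact S₁.min'_mem hne
      · intro s hs
        exact S₁.min'_le s hs
    have := heq ⟨0, by rw [keysF_length]; omega⟩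
    rw [hout] at this
    rw [hxa]
    exact outcome_mem this.symm
  by_cases hxb : x = b
  · -- rev key at index 1
    have hout : outcome (design r ⟨1, by rw [keysF_length]; omega⟩) S₁ = some b := by
      apply outcome_design_eq
      · exact S₁.max'_mem hne
      · intro s hs
        have hsb : s.val ≤ b.val := S₁.le_max' s hs
        show 3 ^ 2 ^ r - 1 - b.val ≤ 3 ^ 2 ^ r - 1 - s.val
        omega
    have := heq ⟨1, by rw [keysF_length]; omega⟩
    rw [hout] at this
    rw [hxb]
    exact outcome_mem this.symm
  · -- middle case
    have hax : a < x := lt_of_le_of_ne (S₁.min'_le x hx) (fun e => hxa e.symm)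
    have hxb' : x < b := lt_of_le_of_ne (S₁.le_max' x hx) hxb
    have hsub : ({a, x, b} : Finset (Fin (3 ^ 2 ^ r))) ⊆ S₁ := by
      intro s hs
      simp only [Finset.mem_insert, Finset.mem_singleton] at hs
      rcases hs with rfl | rfl | rfl
      · exact S₁.min'_mem hne
      · exact hx
      · exact S₁.max'_mem hne
    have hcard : ({a, x, b} : Finset (Fin (3 ^ 2 ^ r))).card = 3 :=
      Finset.card_eq_three.mpr ⟨a, x, b, ne_of_lt hax, ne_of_lt (lt_trans hax hxb'),
        ne_of_lt hxb', rfl⟩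
    have hS1 : S₁ = {a, x, b} :=
      (Finset.eq_of_subset_of_card_le hsub (by rw [hcard]; exact h1)).symm
    obtain ⟨κ, hκ, c1, c2⟩ := cov r a.val x.val b.val hax hxb' b.isLt
    have hκk : κ ∈ keysF r := List.mem_cons_of_mem _ (List.mem_cons_of_mem _ hκ)
    obtain ⟨i, hget⟩ := List.mem_iff_get.mp hκk
    have hout : outcome (design r i) S₁ = some x := by
      apply outcome_design_eq
      · exact hx
      · intro s hs
        rw [hget]
        rw [hS1] at hs
        simp only [Finset.mem_insert, Finset.mem_singleton] at hs
        rcases hs with rfl | rfl | rfl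
        · exact le_of_lt c1
        · exact le_refl _
        · exact le_of_lt c2
    have := heq i
    rw [hout] at this
    exact outcome_mem this.symm

theorem stmt18 (r : ℕ) : TNK (3 ^ 2 ^ r) 3 ≤ 4 * r + 3 := by
  have hmem : (keysF r).length ∈
      {T : ℕ | ∃ 𝒯 : Fin T → List (Fin (3 ^ 2 ^ r)), (∀ i, (𝒯 i).Nodup) ∧
        Feasible (3 ^ 2 ^ r) 3 𝒯} := by
    refine ⟨design r, fun i => testOf_nodup _ _, ?_⟩
    intro S₁ h1 S₂ h2 heq
    have heq' : ∀ i, outcome (design r i) S₁ = outcome (design r i) S₂ :=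
      fun i => congrFun heq i
    exact Finset.Subset.antisymm (subset_lemma r S₁ S₂ h1 heq')
      (subset_lemma r S₂ S₁ h2 (fun i => (heq' i).symm))
  have hle : TNK (3 ^ 2 ^ r) 3 ≤ (keysF r).length := Nat.sInf_le hmem
  have hlen := keysF_length r
  omega
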